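/- For N ≥ 2 i.i.d. points uniform on the circle of circumference 2π and δ ≥ π/6, the probability N((π−2δ)/(2π))^{N−1} that all pairwise included angles avoid [π/2−δ, π/2+δ] under the doubled-angle map equals the probability that all N points θ'_n = 2θ_n (mod 2π) lie in a common closed arc of length π − 2δ. -/

import Mathlib

open Real MeasureTheory

/-- Uniform probability measure on the interval [0, 2π]. -/
noncomputable def unifAngle : Measure ℝ :=
  (ENNReal.ofReal (1 / (2 * π))) • volume.restrict (Set.Icc 0 (2 * π))

namespace Stmt19

open Metric Set

instance fact2pi : Fact (0 < 2 * π) := ⟨by positivity⟩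

noncomputable def nu : Measure (AddCircle (2 * π)) :=
  (ENNReal.ofReal (1 / (2 * π))) • (volume : Measure (AddCircle (2 * π)))

lemma nu_apply (s : Set (AddCircle (2 * π))) :
    nu s = ENNReal.ofReal (1 / (2 * π)) * volume s := rfl

instance : IsProbabilityMeasure nu := by
  constructor
  rw [nu_apply, AddCircle.measure_univ, ← ENNReal.ofReal_mul (by positivity), one_div,
    inv_mul_cancel₀ (by positivity), ENNReal.ofReal_one]

lemma norm_lift (z : AddCircle (2 * π)) : ∃ x : ℝ, (x : AddCircle (2 * π)) = z ∧ |x| = ‖z‖ := by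
  induction z using QuotientAddGroup.induction_on with
  | H y =>
    refine ⟨y - round ((2 * π)⁻¹ * y) * (2 * π), ?_, ?_⟩
    · have h0 : (((round ((2 * π)⁻¹ * y) : ℝ) * (2 * π) : ℝ) : AddCircle (2 * π)) = 0 := by
        rw [← zsmul_eq_mul, AddCircle.coe_zsmul, AddCircle.coe_period, smul_zero]
      rw [AddCircle.coe_sub, h0, sub_zero]
    · rw [show ((QuotientAddGroup.mk y : AddCircle (2*π))) = ((y : ℝ) : AddCircle (2*π)) from rfl,
        AddCircle.norm_eq]

lemma norm_coe_le (x : ℝ) : ‖(x : AddCircle (2 * π))‖ ≤ |x| := by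
  rw [AddCircle.norm_eq' (2 * π) (by positivity)]
  calc 2 * π * |(2 * π)⁻¹ * x - round ((2 * π)⁻¹ * x)|
      ≤ 2 * π * |(2 * π)⁻¹ * x - ((0 : ℤ) : ℝ)| :=
        mul_le_mul_of_nonneg_left (round_le ((2 * π)⁻¹ * x) 0) (by positivity)
    _ = |x| := by
        rw [Int.cast_zero, sub_zero, abs_mul, abs_inv,
          abs_of_pos (by positivity : (0:ℝ) < 2 * π)]
        field_simp

open Metric Set
open scoped ENNReal

abbrev Circ : Type := AddCircle (2 * π)

lemma key {n : ℕ} (i : Fin (n + 1)) (B : Circ → Set Circ)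
    (hB : MeasurableSet {q : Circ × Circ | q.2 ∈ B q.1})
    (v : ℝ≥0∞) (hv : ∀ x, nu (B x) = v) :
    (Measure.pi fun _ : Fin (n + 1) => nu) {z | ∀ j, j ≠ i → z j ∈ B (z i)} = v ^ n := by
  have hmp := measurePreserving_piFinSuccAbove (fun _ : Fin (n + 1) => nu) i
  set e := MeasurableEquiv.piFinSuccAbove (fun _ : Fin (n + 1) => Circ) i with he
  have hTm : MeasurableSet {q : Circ × (Fin n → Circ) | ∀ j, q.2 j ∈ B q.1} := by
    have h2 : {q : Circ × (Fin n → Circ) | ∀ j : Fin n, q.2 j ∈ B q.1}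
        = ⋂ j : Fin n, (fun q : Circ × (Fin n → Circ) => (q.1, q.2 j)) ⁻¹' {q : Circ × Circ | q.2 ∈ B q.1} := by
      ext q; simp
    rw [h2]
    exact MeasurableSet.iInter fun j =>
      hB.preimage (measurable_fst.prodMk ((measurable_pi_apply j).comp measurable_snd))
  have hset : {z : Fin (n + 1) → Circ | ∀ j, j ≠ i → z j ∈ B (z i)}
      = e ⁻¹' {q : Circ × (Fin n → Circ) | ∀ j, q.2 j ∈ B q.1} := by
    ext z
    simp only [Set.mem_preimage, Set.mem_setOf_eq, he, MeasurableEquiv.piFinSuccAbove_apply,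
      Fin.removeNth]
    constructor
    · intro h j
      exact h (i.succAbove j) (Fin.succAbove_ne i j)
    · intro h j hj
      obtain ⟨k, rfl⟩ := Fin.exists_succAbove_eq hj
      exact h k
  rw [hset, hmp.measure_preimage hTm.nullMeasurableSet, Measure.prod_apply hTm]
  have hsec : ∀ x : Circ, (Prod.mk x ⁻¹' {q : Circ × (Fin n → Circ) | ∀ j, q.2 j ∈ B q.1})
      = Set.pi Set.univ (fun _ : Fin n => B x) := by
    intro x; ext w; simp [Set.mem_pi]
  simp only [hsec, Measure.pi_pi, hv, Finset.prod_const, Finset.card_univ, Fintype.card_fin]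
  rw [lintegral_const, measure_univ, mul_one]

noncomputable def cpt (l : ℝ) : Circ := ((l / 2 : ℝ) : Circ)

def E (l : ℝ) {N : ℕ} (i : Fin N) : Set (Fin N → Circ) :=
  {z | ∀ j, j ≠ i → z j ∈ ball (z i + cpt l) (l / 2)}

def G (l : ℝ) {N : ℕ} (i : Fin N) : Set (Fin N → Circ) :=
  {z | ∀ j, j ≠ i → z j ∈ closedBall (z i + cpt l) (l / 2)}

lemma nu_ball (l : ℝ) (hl : l ≤ 2 * π) (x : Circ) :
    nu (ball x (l / 2)) = ENNReal.ofReal (l / (2 * π)) := by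
  rw [nu_apply, measure_congr (AddCircle.closedBall_ae_eq_ball).symm,
    AddCircle.volume_closedBall, min_eq_right (by linarith : 2 * (l / 2) ≤ 2 * π),
    ← ENNReal.ofReal_mul (by positivity)]
  congr 1
  field_simp
lemma nu_closedBall (l : ℝ) (hl : l ≤ 2 * π) (x : Circ) :
    nu (closedBall x (l / 2)) = ENNReal.ofReal (l / (2 * π)) := by
  rw [← nu_ball l hl x, nu_apply, nu_apply,
    measure_congr (AddCircle.closedBall_ae_eq_ball)]

lemma measE {n : ℕ} (l : ℝ) (hl : l ≤ 2 * π) (i : Fin (n + 1)) :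
    (Measure.pi fun _ : Fin (n + 1) => nu) (E l i) = ENNReal.ofReal (l / (2 * π)) ^ n := by
  refine key i _ ?_ _ (fun x => nu_ball l hl _)
  have hc : Continuous fun q : Circ × Circ => dist q.2 (q.1 + cpt l) :=
    continuous_snd.dist (continuous_fst.add continuous_const)
  exact (isOpen_lt hc continuous_const).measurableSet

lemma measG {n : ℕ} (l : ℝ) (hl : l ≤ 2 * π) (i : Fin (n + 1)) :
    (Measure.pi fun _ : Fin (n + 1) => nu) (G l i) = ENNReal.ofReal (l / (2 * π)) ^ n := by
  refine key i _ ?_ _ (fun x => nu_closedBall l hl _)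
  have hc : Continuous fun q : Circ × Circ => dist q.2 (q.1 + cpt l) :=
    continuous_snd.dist (continuous_fst.add continuous_const)
  exact (isClosed_le hc continuous_const).measurableSet

open Metric Set
open scoped ENNReal

lemma norm_coe_eq (x : ℝ) (h1 : |x| ≤ π) : ‖(x : Circ)‖ = |x| := by
  rw [AddCircle.norm_coe_eq_abs_iff (2 * π) (by positivity)]
  rw [abs_of_pos (by positivity : (0:ℝ) < 2 * π)]
  linarith

lemma E_disj {N : ℕ} {l : ℝ} (hl0 : 0 < l) (hl23 : l ≤ 2 * π / 3) :
    Pairwise (Function.onFun Disjoint (E l (N := N))) := by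
  have hπ := pi_pos
  intro i j hij
  rw [Function.onFun, Set.disjoint_left]
  intro z hzi hzj
  have h1 := hzi j (Ne.symm hij)
  have h2 := hzj i hij
  rw [mem_ball, dist_eq_norm] at h1 h2
  have hsum : ‖(z j - (z i + cpt l)) + (z i - (z j + cpt l))‖ < l := by
    calc ‖(z j - (z i + cpt l)) + (z i - (z j + cpt l))‖
        ≤ ‖z j - (z i + cpt l)‖ + ‖z i - (z j + cpt l)‖ := norm_add_le _ _
      _ < l / 2 + l / 2 := add_lt_add h1 h2
      _ = l := by ring
  have hre : (z j - (z i + cpt l)) + (z i - (z j + cpt l)) = -(cpt l + cpt l) := by abel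
  have hcc : cpt l + cpt l = ((l : ℝ) : Circ) := by
    simp only [cpt, ← AddCircle.coe_add]
    norm_num
  rw [hre, norm_neg, hcc, norm_coe_eq l (by rw [abs_of_pos hl0]; linarith)] at hsum
  rw [abs_of_pos hl0] at hsum
  exact lt_irrefl _ hsum

def B1 (l : ℝ) {N : ℕ} : Set (Fin N → Circ) := {z | ∀ k m, k ≠ m → dist (z k) (z m) < l}

lemma E_subset_B1 {N : ℕ} {l : ℝ} (hl0 : 0 < l) (hl23 : l ≤ 2 * π / 3) (i : Fin N) :
    E l i ⊆ B1 l := by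
  have hπ := pi_pos
  intro z hz k m hkm
  have hnc : ∀ w : Circ, dist w (w + cpt l) = l / 2 := by
    intro w
    rw [dist_eq_norm, show w - (w + cpt l) = -(cpt l) by abel, norm_neg]
    simp only [cpt]
    rw [norm_coe_eq _ (by rw [abs_of_pos (by positivity)]; linarith)]
    rw [abs_of_pos (by positivity)]
  rcases eq_or_ne k i with rfl | hk
  · have h1 := hz m (Ne.symm hkm)
    rw [mem_ball] at h1
    calc dist (z k) (z m) ≤ dist (z k) (z k + cpt l) + dist (z k + cpt l) (z m) :=
          dist_triangle _ _ _
      _ < l / 2 + l / 2 := by rw [hnc, dist_comm]; exact add_lt_add_right h1 _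
      _ = l := by ring
  rcases eq_or_ne m i with rfl | hm
  · have h1 := hz k hk
    rw [mem_ball] at h1
    calc dist (z k) (z m) ≤ dist (z k) (z m + cpt l) + dist (z m + cpt l) (z m) :=
          dist_triangle _ _ _
      _ < l / 2 + l / 2 := by
          rw [dist_comm (z m + cpt l) (z m), hnc]
          exact add_lt_add_left h1 _
      _ = l := by ring
  · have h1 := hz k hk
    have h2 := hz m hm
    rw [mem_ball] at h1 h2
    calc dist (z k) (z m) ≤ dist (z k) (z i + cpt l) + dist (z i + cpt l) (z m) :=
          dist_triangle _ _ _
      _ < l / 2 + l / 2 := by rw [dist_comm (z i + cpt l) (z m)]; exact add_lt_add h1 h2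
      _ = l := by ring

lemma mem_cball_iff {l : ℝ} (hl0 : 0 < l) (hl23 : l ≤ 2 * π / 3) (w a : Circ) :
    w ∈ closedBall (a + cpt l) (l / 2) ↔ ∃ t ∈ Icc (0:ℝ) l, w = a + ((t : ℝ) : Circ) := by
  have hπ := pi_pos
  constructor
  · intro hw
    rw [mem_closedBall, dist_eq_norm] at hw
    obtain ⟨x, hx, hx'⟩ := norm_lift (w - (a + cpt l))
    have hxle : |x| ≤ l / 2 := by rw [hx']; exact hw
    obtain ⟨hx1, hx2⟩ := abs_le.mp hxle
    refine ⟨l / 2 + x, ⟨by linarith, by linarith⟩, ?_⟩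
    have h3 : ((l / 2 + x : ℝ) : Circ) = cpt l + ((x:ℝ) : Circ) := by
      rw [AddCircle.coe_add]; rfl
    rw [h3, hx]
    abel
  · rintro ⟨t, ⟨ht0, htl⟩, rfl⟩
    rw [mem_closedBall, dist_eq_norm]
    have h3 : a + ((t:ℝ) : Circ) - (a + cpt l) = ((t - l / 2 : ℝ) : Circ) := by
      simp only [cpt, AddCircle.coe_sub]
      abel
    rw [h3]
    exact (norm_coe_le _).trans (abs_le.mpr ⟨by linarith, by linarith⟩)

def B2 (l : ℝ) {N : ℕ} : Set (Fin N → Circ) :=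
  {z | ∃ a : Circ, ∀ k, ∃ t ∈ Icc (0:ℝ) l, z k = a + ((t : ℝ) : Circ)}

lemma G_subset_B2 {N : ℕ} {l : ℝ} (hl0 : 0 < l) (hl23 : l ≤ 2 * π / 3) (i : Fin N) :
    G l i ⊆ B2 l := by
  intro z hz
  refine ⟨z i, fun k => ?_⟩
  rcases eq_or_ne k i with rfl | hk
  · exact ⟨0, ⟨le_refl _, hl0.le⟩, by norm_num⟩
  · exact (mem_cball_iff hl0 hl23 _ _).mp (hz k hk)

lemma E_subset_G {N : ℕ} {l : ℝ} (i : Fin N) : E l i ⊆ G l i := by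
  intro z hz j hj
  exact ball_subset_closedBall (hz j hj)

lemma B2_subset {n : ℕ} {l : ℝ} (hl0 : 0 < l) (hl23 : l ≤ 2 * π / 3) :
    B2 l (N := n + 1) ⊆ ⋃ i, G l i := by
  intro z hz
  obtain ⟨a, h⟩ := hz
  choose t ht hzt using h
  obtain ⟨m, -, hm⟩ := Finset.exists_min_image Finset.univ t ⟨0, Finset.mem_univ 0⟩
  refine Set.mem_iUnion.mpr ⟨m, fun j hj => ?_⟩
  rw [mem_cball_iff hl0 hl23]
  refine ⟨t j - t m, ⟨sub_nonneg.mpr (hm j (Finset.mem_univ j)), ?_⟩, ?_⟩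
  · have := (ht j).2; have := (ht m).1; linarith
  · rw [hzt j, hzt m, AddCircle.coe_sub]
    abel

lemma B1_subset {n : ℕ} {l : ℝ} (hl0 : 0 < l) (hl23 : l ≤ 2 * π / 3) :
    B1 l (N := n + 1) ⊆ ⋃ i, G l i := by
  have hπ := pi_pos
  intro z hz
  have hrep : ∀ k : Fin (n + 1), ∃ y : ℝ, ((y : ℝ) : Circ) = z k - z 0 ∧ |y| = ‖z k - z 0‖ :=
    fun k => norm_lift _
  choose y hy hy' using hrep
  have hbound : ∀ k, |y k| < l := by
    intro k
    rcases eq_or_ne k 0 with rfl | hk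
    · rw [hy']; simpa using hl0
    · rw [hy', ← dist_eq_norm]; exact hz k 0 hk
  obtain ⟨m, -, hm⟩ := Finset.exists_min_image Finset.univ y ⟨0, Finset.mem_univ 0⟩
  refine Set.mem_iUnion.mpr ⟨m, fun j hj => ?_⟩
  -- s := y j - y m
  have hs0 : 0 ≤ y j - y m := sub_nonneg.mpr (hm j (Finset.mem_univ j))
  have hs2l : y j - y m < 2 * l := by
    have h1 := abs_lt.mp (hbound j)
    have h2 := abs_lt.mp (hbound m)
    obtain ⟨h1a, h1b⟩ := h1; obtain ⟨h2a, h2b⟩ := h2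
    linarith
  have hmk : ((y j - y m : ℝ) : Circ) = z j - z m := by
    rw [AddCircle.coe_sub, hy, hy]; abel
  have hd : ‖z j - z m‖ < l := by rw [← dist_eq_norm]; exact hz j m hj
  obtain ⟨u, hu, hu'⟩ := norm_lift (z j - z m)
  have hul : |u| < l := by rw [hu']; exact hd
  have hzero : ((u - (y j - y m) : ℝ) : Circ) = 0 := by
    rw [AddCircle.coe_sub, hu, hmk, sub_self]
  obtain ⟨k, hk⟩ := (AddCircle.coe_eq_zero_iff (2 * π)).mp hzero
  have hk0 : k = 0 := by
    by_contra hkne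
    have h2 : (1:ℝ) ≤ |(k:ℝ)| := by
      rw [← Int.cast_abs]
      exact_mod_cast Int.one_le_abs (by exact_mod_cast hkne)
    have h3 : |(k:ℝ) * (2 * π)| = |(k:ℝ)| * (2 * π) := by
      rw [abs_mul, abs_of_pos (by positivity : (0:ℝ) < 2 * π)]
    have h4 : |u - (y j - y m)| < 2 * π := by
      obtain ⟨hua, hub⟩ := abs_lt.mp hul
      rw [abs_lt]; constructor <;> linarith
    rw [← hk, zsmul_eq_mul, h3] at h4
    nlinarith
  rw [hk0, zero_smul] at hk
  have hus : u = y j - y m := by linarith [sub_eq_zero.mp hk.symm]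
  -- hk : 0 = u - (y j - y m)
  have hsl : y j - y m < l := by
    rw [← hus]
    calc u ≤ |u| := le_abs_self u
      _ < l := hul
  rw [mem_cball_iff hl0 hl23]
  refine ⟨y j - y m, ⟨hs0, hsl.le⟩, ?_⟩
  rw [hmk]
  abel

open Metric Set
open scoped ENNReal

lemma E_measurable {N : ℕ} {l : ℝ} (i : Fin N) : MeasurableSet (E l i) := by
  have h : E l i = ⋂ j, ⋂ (_ : j ≠ i),
      {z : Fin N → Circ | dist (z j) (z i + cpt l) < l / 2} := by
    ext z; simp [E, mem_ball]
  rw [h]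
  refine MeasurableSet.iInter fun j => MeasurableSet.iInter fun _ => ?_
  exact (isOpen_lt ((continuous_apply j).dist ((continuous_apply i).add continuous_const))
    continuous_const).measurableSet

lemma G_measurable {N : ℕ} {l : ℝ} (i : Fin N) : MeasurableSet (G l i) := by
  have h : G l i = ⋂ j, ⋂ (_ : j ≠ i),
      {z : Fin N → Circ | dist (z j) (z i + cpt l) ≤ l / 2} := by
    ext z; simp [G, mem_closedBall]
  rw [h]
  refine MeasurableSet.iInter fun j => MeasurableSet.iInter fun _ => ?_
  exact (isClosed_le ((continuous_apply j).dist ((continuous_apply i).add continuous_const))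
    continuous_const).measurableSet

lemma B1_measurable {N : ℕ} {l : ℝ} : MeasurableSet (B1 l (N := N)) := by
  have h : B1 l (N := N) = ⋂ k, ⋂ m, ⋂ (_ : k ≠ m),
      {z : Fin N → Circ | dist (z k) (z m) < l} := by
    ext z; simp [B1]
  rw [h]
  refine MeasurableSet.iInter fun k => MeasurableSet.iInter fun m =>
    MeasurableSet.iInter fun _ => ?_
  exact (isOpen_lt ((continuous_apply k).dist (continuous_apply m))
    continuous_const).measurableSet

lemma B2_eq {n : ℕ} {l : ℝ} (hl0 : 0 < l) (hl23 : l ≤ 2 * π / 3) :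
    B2 l (N := n + 1) = ⋃ i, G l i :=
  Set.Subset.antisymm (B2_subset hl0 hl23)
    (Set.iUnion_subset fun i => G_subset_B2 hl0 hl23 i)

lemma sandwich {n : ℕ} {l : ℝ} (hl0 : 0 < l) (hl23 : l ≤ 2 * π / 3)
    (B : Set (Fin (n + 1) → Circ)) (h1 : ∀ i, E l i ⊆ B) (h2 : B ⊆ ⋃ i, G l i) :
    (Measure.pi fun _ : Fin (n + 1) => nu) B
      = (n + 1 : ℕ) * ENNReal.ofReal (l / (2 * π)) ^ n := by
  have hπ := pi_pos
  have hl2π : l ≤ 2 * π := by linarith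
  set P := Measure.pi fun _ : Fin (n + 1) => nu with hP
  have hlow : P (⋃ i, E l i) = (n + 1 : ℕ) * ENNReal.ofReal (l / (2 * π)) ^ n := by
    rw [measure_iUnion (E_disj hl0 hl23) (fun i => E_measurable i), tsum_fintype]
    simp only [hP, measE l hl2π, Finset.sum_const, Finset.card_univ, Fintype.card_fin,
      nsmul_eq_mul]
  have hup : P (⋃ i, G l i) ≤ (n + 1 : ℕ) * ENNReal.ofReal (l / (2 * π)) ^ n := by
    calc P (⋃ i, G l i) ≤ ∑' i, P (G l i) := measure_iUnion_le _
      _ = (n + 1 : ℕ) * ENNReal.ofReal (l / (2 * π)) ^ n := by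
          rw [tsum_fintype]
          simp only [hP, measG l hl2π, Finset.sum_const, Finset.card_univ, Fintype.card_fin,
            nsmul_eq_mul]
  refine le_antisymm (le_trans (measure_mono h2) hup) ?_
  rw [← hlow]
  exact measure_mono (Set.iUnion_subset fun i => h1 i)

lemma mp_double : MeasurePreserving (fun x : ℝ => ((2 * x : ℝ) : Circ)) unifAngle nu := by
  have h0 : MeasurePreserving ((↑·) : ℝ → Circ) (volume.restrict (Ioc (0:ℝ) (0 + 2 * π)))
      volume := AddCircle.measurePreserving_mk (2 * π) 0
  have h1 : MeasurePreserving (fun z : Circ => (2:ℤ) • z) volume volume :=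
    Measure.measurePreserving_zsmul volume (by norm_num : (2:ℤ) ≠ 0)
  have h2 := h1.comp h0
  have h3 : MeasurePreserving (fun x : ℝ => ((2 * x : ℝ) : Circ))
      (volume.restrict (Ioc (0:ℝ) (0 + 2 * π))) volume := by
    convert h2 using 2 with x
    show ((2 * x : ℝ) : Circ) = (2:ℤ) • ((x : ℝ) : Circ)
    rw [← AddCircle.coe_zsmul]
    norm_num
  have h4 : unifAngle
      = (ENNReal.ofReal (1 / (2 * π))) • volume.restrict (Ioc (0:ℝ) (0 + 2 * π)) := by
    rw [unifAngle, zero_add]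
    congr 1
    exact (Measure.restrict_congr_set Ioc_ae_eq_Icc).symm
  rw [h4]
  exact ⟨h3.measurable, by rw [Measure.map_smul, h3.map_eq]; rfl⟩

lemma normIff {δ : ℝ} (hδ1 : π / 6 ≤ δ) (hδ2 : δ < π / 2) (x : ℝ) :
    (‖(x : Circ)‖ ∉ Icc (π / 2 - δ) (π / 2 + δ)) ↔ ‖((2 * x : ℝ) : Circ)‖ < π - 2 * δ := by
  have hπ := pi_pos
  have hδ0 : 0 < δ := lt_of_lt_of_le (by linarith) hδ1
  obtain ⟨u, hu, hu'⟩ := norm_lift ((x : ℝ) : Circ)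
  have h2 : ((2 * x : ℝ) : Circ) = ((2 * u : ℝ) : Circ) := by
    have hz : ((2 * x : ℝ) : Circ) - ((2 * u : ℝ) : Circ) = 0 := by
      rw [← AddCircle.coe_sub, show (2 * x - 2 * u : ℝ) = (2:ℤ) • (x - u) by rw [zsmul_eq_mul]; push_cast; ring,
        AddCircle.coe_zsmul, AddCircle.coe_sub, hu, sub_self, smul_zero]
    exact sub_eq_zero.mp hz
  have huπ : |u| ≤ π := by
    rw [hu']
    have h := AddCircle.norm_le_half_period (2 * π) (x := ((x:ℝ) : Circ)) (by positivity)
    rw [abs_of_pos (by positivity : (0:ℝ) < 2 * π)] at h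
    linarith
  rw [← hu', h2]
  by_cases hcase : |u| ≤ π / 2
  · have hn : ‖((2 * u : ℝ) : Circ)‖ = |2 * u| :=
      norm_coe_eq _ (by rw [abs_mul, abs_two]; linarith)
    rw [hn, abs_mul, abs_two]
    simp only [Set.mem_Icc, not_and_or, not_le]
    constructor
    · rintro (h | h)
      · linarith
      · linarith
    · intro h; left; linarith
  · push_neg at hcase
    have hn : ‖((2 * u : ℝ) : Circ)‖ = 2 * π - 2 * |u| := by
      have hnormeq : ‖((2 * |u| : ℝ) : Circ)‖ = ‖((2 * u : ℝ) : Circ)‖ := by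
        rcases abs_cases u with ⟨h, _⟩ | ⟨h, _⟩
        · rw [h]
        · rw [h, show (2 * -u : ℝ) = -(2 * u) by ring, AddCircle.coe_neg, norm_neg]
      rw [← hnormeq]
      have hper : ((2 * |u| : ℝ) : Circ) = ((2 * |u| - 2 * π : ℝ) : Circ) := by
        conv_lhs => rw [show (2 * |u| : ℝ) = (2 * |u| - 2 * π) + 2 * π by ring]
        rw [AddCircle.coe_add_period]
      rw [hper, norm_coe_eq _ (by rw [abs_of_nonpos (by linarith)]; linarith),
        abs_of_nonpos (by linarith)]
      ring
    rw [hn]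
    simp only [Set.mem_Icc, not_and_or, not_le]
    constructor
    · rintro (h | h)
      · linarith
      · linarith
    · intro h; right; linarith

end Stmt19

open Stmt19 Metric ENNReal in
/-- For N ≥ 2 i.i.d. directions uniform on [0, 2π) and π/6 ≤ δ < π/2, the probability
N((π−2δ)/(2π))^{N−1} that all pairwise included angles (shorter circular distances)
avoid [π/2−δ, π/2+δ] equals the probability that all doubled angles θ'ₙ = 2θₙ (mod 2π)
lie in a common closed arc of length π − 2δ. -/
theorem stmt_19 (N : ℕ) (hN : 2 ≤ N) (δ : ℝ) (hδ1 : π / 6 ≤ δ) (hδ2 : δ < π / 2) :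
    ((Measure.pi fun _ : Fin N => unifAngle)
      {θ : Fin N → ℝ | ∀ i j, i ≠ j →
        ‖((θ i - θ j : ℝ) : AddCircle (2 * π))‖ ∉ Set.Icc (π / 2 - δ) (π / 2 + δ)}).toReal
      = N * ((π - 2 * δ) / (2 * π)) ^ (N - 1)
    ∧ ((Measure.pi fun _ : Fin N => unifAngle)
      {θ : Fin N → ℝ | ∃ a : ℝ, ∀ n, ∃ t ∈ Set.Icc (0:ℝ) (π - 2 * δ),
        ((2 * θ n : ℝ) : AddCircle (2 * π)) = ((a + t : ℝ) : AddCircle (2 * π))}).toReal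
      = N * ((π - 2 * δ) / (2 * π)) ^ (N - 1) := by
  have hπ := Real.pi_pos
  obtain ⟨n, rfl⟩ : ∃ n, N = n + 1 := ⟨N - 1, by omega⟩
  have hδ0 : 0 < δ := lt_of_lt_of_le (by linarith) hδ1
  have hl0 : 0 < π - 2 * δ := by linarith
  have hl23 : π - 2 * δ ≤ 2 * π / 3 := by linarith
  have hΦ : MeasurePreserving (fun θ : Fin (n + 1) → ℝ => fun i => ((2 * θ i : ℝ) : Circ))
      (Measure.pi fun _ => unifAngle) (Measure.pi fun _ => nu) :=
    measurePreserving_pi _ _ (fun _ => mp_double)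
  have htoReal : (((n + 1 : ℕ) : ℝ≥0∞) * ENNReal.ofReal ((π - 2 * δ) / (2 * π)) ^ n).toReal
      = ((n + 1 : ℕ) : ℝ) * ((π - 2 * δ) / (2 * π)) ^ ((n + 1) - 1) := by
    rw [ENNReal.toReal_mul, ENNReal.toReal_pow, ENNReal.toReal_natCast,
      ENNReal.toReal_ofReal (div_nonneg hl0.le (by positivity)), Nat.add_sub_cancel]
  constructor
  · have hset : {θ : Fin (n + 1) → ℝ | ∀ i j, i ≠ j →
        ‖((θ i - θ j : ℝ) : AddCircle (2 * π))‖ ∉ Set.Icc (π / 2 - δ) (π / 2 + δ)}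
        = (fun θ : Fin (n + 1) → ℝ => fun i => ((2 * θ i : ℝ) : Circ)) ⁻¹'
          (B1 (π - 2 * δ)) := by
      ext θ
      simp only [Set.mem_setOf_eq, Set.mem_preimage, B1]
      refine forall_congr' fun i => forall_congr' fun j => imp_congr_right fun hij => ?_
      rw [normIff hδ1 hδ2 (θ i - θ j), dist_eq_norm,
        show ((2 * θ i : ℝ) : Circ) - ((2 * θ j : ℝ) : Circ)
          = ((2 * (θ i - θ j) : ℝ) : Circ) by rw [← AddCircle.coe_sub]; congr 1; ring]
    rw [hset, hΦ.measure_preimage B1_measurable.nullMeasurableSet,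
      sandwich hl0 hl23 (B1 (π - 2 * δ)) (fun i => E_subset_B1 hl0 hl23 i)
        (B1_subset hl0 hl23), htoReal]
  · have hset : {θ : Fin (n + 1) → ℝ | ∃ a : ℝ, ∀ k, ∃ t ∈ Set.Icc (0:ℝ) (π - 2 * δ),
        ((2 * θ k : ℝ) : AddCircle (2 * π)) = ((a + t : ℝ) : AddCircle (2 * π))}
        = (fun θ : Fin (n + 1) → ℝ => fun i => ((2 * θ i : ℝ) : Circ)) ⁻¹'
          (B2 (π - 2 * δ)) := by
      ext θ
      simp only [Set.mem_setOf_eq, Set.mem_preimage, B2]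
      constructor
      · rintro ⟨a, h⟩
        refine ⟨((a : ℝ) : Circ), fun k => ?_⟩
        obtain ⟨t, ht, he⟩ := h k
        exact ⟨t, ht, by rw [he, AddCircle.coe_add]⟩
      · rintro ⟨a, h⟩
        obtain ⟨a₀, rfl⟩ : ∃ a₀ : ℝ, ((a₀ : ℝ) : Circ) = a := Quot.exists_rep a
        refine ⟨a₀, fun k => ?_⟩
        obtain ⟨t, ht, he⟩ := h k
        exact ⟨t, ht, by rw [he, AddCircle.coe_add]⟩
    have hB2meas : MeasurableSet (B2 (π - 2 * δ) (N := n + 1)) := by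
      rw [B2_eq hl0 hl23]
      exact MeasurableSet.iUnion fun i => G_measurable i
    rw [hset, hΦ.measure_preimage hB2meas.nullMeasurableSet,
      sandwich hl0 hl23 (B2 (π - 2 * δ))
        (fun i => (E_subset_G i).trans (G_subset_B2 hl0 hl23 i)) (B2_subset hl0 hl23), htoReal]
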